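/- arXiv:2209.09805 — 2 statements merged into one kernel-verified Lean document; each statement's English description precedes it below -/
import Mathlib

section
/- Let g ≥ 2 be an integer, and let p > q > 0 be coprime integers such that p does not divide 2g - 2. Then there exists an integer i for which the equation ⌊(i + p·s)/q⌋ = g - 1 has an integer solution s, but the equation ⌊(i + p·s)/q⌋ = 1 - g has no integer solution s. -/
lemma floor_div_eq_iff' (x m q : ℤ) (hq : 0 < q) :
    ⌊((x : ℚ)) / (q : ℚ)⌋ = m ↔ q * m ≤ x ∧ x < q * m + q := by
  have hq' : (0 : ℚ) < (q : ℚ) := by exact_mod_cast hq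
  rw [Int.floor_eq_iff, le_div_iff₀ hq', div_lt_iff₀ hq']
  have h1 : ((m : ℚ) * q ≤ x) ↔ q * m ≤ x := by
    rw [show (m : ℚ) * q = ((q * m : ℤ) : ℚ) by push_cast; ring]
    exact Int.cast_le
  have h2 : ((x : ℚ) < ((m : ℚ) + 1) * q) ↔ x < q * m + q := by
    rw [show ((m : ℚ) + 1) * q = ((q * m + q : ℤ) : ℚ) by push_cast; ring]
    exact Int.cast_lt
  rw [h1, h2]

/-- If `g ≥ 2` and `p > q > 0` are coprime with `p ∤ 2g - 2`, then there is an integer `i`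
such that `⌊(i + p s)/q⌋ = g - 1` has an integer solution `s` but `⌊(i + p s)/q⌋ = 1 - g`
does not. -/
theorem stmt_2 (g p q : ℤ) (hg : 2 ≤ g) (hq : 0 < q) (hpq : q < p)
    (hcop : IsCoprime p q) (hndvd : ¬ p ∣ (2 * g - 2)) :
    ∃ i : ℤ,
      (∃ s : ℤ, ⌊((i + p * s : ℤ) : ℚ) / (q : ℚ)⌋ = g - 1) ∧
      ¬ (∃ s : ℤ, ⌊((i + p * s : ℤ) : ℚ) / (q : ℚ)⌋ = 1 - g) := by
  have hp : 0 < p := lt_trans hq hpq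
  have hpt : ¬ p ∣ q * (2 * g - 2) := fun h => hndvd (hcop.dvd_of_dvd_mul_left h)
  obtain ⟨e, c, he0, hep, hene, hc⟩ :
      ∃ e c : ℤ, 0 ≤ e ∧ e < p ∧ e ≠ 0 ∧ -(q * (2 * g - 2)) = e + p * c := by
    refine ⟨(-(q * (2 * g - 2))) % p, (-(q * (2 * g - 2))) / p,
      Int.emod_nonneg _ (by omega), Int.emod_lt_of_pos _ hp, ?_,
      by linarith [Int.emod_add_mul_ediv (-(q * (2 * g - 2))) p]⟩
    intro h
    exact hpt (dvd_neg.mp (Int.dvd_of_emod_eq_zero h))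
  set j : ℤ := if e ≤ p - q then 0 else q - p + e with hj
  have hj0 : 0 ≤ j := by rw [hj]; split <;> omega
  have hjq : j ≤ q - 1 := by rw [hj]; split <;> omega
  refine ⟨q * (g - 1) + j, ⟨0, ?_⟩, ?_⟩
  · rw [floor_div_eq_iff' _ _ _ hq]
    constructor <;> nlinarith
  · rintro ⟨s, hs⟩
    rw [floor_div_eq_iff' _ _ _ hq] at hs
    obtain ⟨h1, h2⟩ := hs
    have hy : q * (g - 1) + j + p * s - q * (1 - g) = j - e + p * (s - c) := by
      linear_combination -hc
    have hy0 : 0 ≤ j - e + p * (s - c) := by linarith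
    have hy1 : j - e + p * (s - c) ≤ q - 1 := by linarith
    by_cases hcase : e ≤ p - q
    · have hj' : j = 0 := by rw [hj]; simp [hcase]
      rw [hj'] at hy0 hy1
      rcases le_or_gt (s - c) 0 with h | h
      · have : p * (s - c) ≤ 0 := mul_nonpos_of_nonneg_of_nonpos hp.le h
        have he1 : 1 ≤ e := by omega
        linarith
      · have h1' : 1 ≤ s - c := h
        have : p * 1 ≤ p * (s - c) := mul_le_mul_of_nonneg_left h1' hp.le
        linarith
    · have hj' : j = q - p + e := by rw [hj]; simp [hcase]
      rw [hj'] at hy0 hy1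
      rcases le_or_gt (s - c) 0 with h | h
      · have : p * (s - c) ≤ 0 := mul_nonpos_of_nonneg_of_nonpos hp.le h
        linarith
      · have h1' : 1 ≤ s - c := h
        have : p * 1 ≤ p * (s - c) := mul_le_mul_of_nonneg_left h1' hp.le
        linarith
end

section
/- Suppose r̂₀, ν̂ are integers with r̂₀ ≥ |ν̂| ≥ 0, r̂₀ - |ν̂| even, ν̂ zero or odd, and suppose there exist coprime integers p, q with 0 < p ≤ q such that q·r̂₀ + |p - q·ν̂| = 4q - p. Then either (r̂₀, ν̂) ∈ {(3,1), (2,0), (1,-1)}; moreover in the latter two cases p = q = 1. -/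
/-- If `r̂₀ ≥ |ν̂| ≥ 0`, `r̂₀ - |ν̂|` is even, `ν̂` is zero or odd, and there are coprime
integers `0 < p ≤ q` with `q r̂₀ + |p - q ν̂| = 4q - p`, then `(r̂₀, ν̂)` is one of
`(3,1)`, `(2,0)`, `(1,-1)`, and in the latter two cases `p = q = 1`. -/
theorem stmt_16 (r₀ ν p q : ℤ) (habs : |ν| ≤ r₀) (heven : Even (r₀ - |ν|))
    (hodd : ν = 0 ∨ Odd ν) (hp : 0 < p) (hpq : p ≤ q) (hcop : IsCoprime p q)
    (hD : q * r₀ + |p - q * ν| = 4 * q - p) :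
    (r₀ = 3 ∧ ν = 1) ∨ (r₀ = 2 ∧ ν = 0 ∧ p = 1 ∧ q = 1) ∨
      (r₀ = 1 ∧ ν = -1 ∧ p = 1 ∧ q = 1) := by
  have hq : 0 < q := lt_of_lt_of_le hp hpq
  -- lower bound on the abs term
  have h1 : q * |ν| - p ≤ |p - q * ν| := by
    have h := abs_sub_abs_le_abs_sub (q * ν) p
    rw [abs_sub_comm, abs_mul, abs_of_pos hq] at h
    have hpabs : |p| = p := abs_of_pos hp
    linarith
  have hsum : r₀ + |ν| ≤ 4 := by
    have h2 : q * (r₀ + |ν|) ≤ q * 4 := by nlinarith [h1, hD]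
    exact le_of_mul_le_mul_left h2 hq
  obtain ⟨hν1, hν2⟩ : -1 ≤ ν ∧ ν ≤ 1 := by
    rcases hodd with h0 | ⟨k, hk⟩
    · constructor <;> omega
    · have habs2 : |ν| ≤ 2 := by
        have := abs_nonneg ν; linarith
      rw [abs_le] at habs2
      constructor <;> omega
  have hq2le : ∀ x : ℤ, q * x = 2 * p → q = 1 ∨ q = 2 := by
    intro x hx
    have hdvd : q ∣ 2 * p := ⟨x, hx.symm⟩
    have hdvd2 : q ∣ 2 := hcop.symm.dvd_of_dvd_mul_right hdvd
    have := Int.le_of_dvd (by norm_num) hdvd2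
    omega
  interval_cases ν
  · -- ν = -1
    have habs1 : |(-1 : ℤ)| = 1 := by norm_num
    rw [habs1] at heven habs
    have hab : |p - q * (-1)| = p + q := by
      rw [abs_of_pos]; ring; linarith
    rw [hab] at hD
    have hx : q * (3 - r₀) = 2 * p := by ring_nf; linarith
    rcases hq2le _ hx with h | h
    · subst h
      right; right
      have hp1 : p = 1 := by omega
      subst hp1
      refine ⟨by omega, rfl, rfl, rfl⟩
    · subst h
      have hp1 : p = 1 := by
        interval_cases p
        · rfl
        · exfalso
          have : ¬ IsCoprime (2:ℤ) 2 := by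
            rw [Int.isCoprime_iff_gcd_eq_one]; decide
          exact this hcop
      subst hp1
      have hr : r₀ = 2 := by omega
      exfalso
      rw [hr] at heven
      exact (by decide : ¬ Even ((2:ℤ) - 1)) heven
  · -- ν = 0
    have hab : |p - q * 0| = p := by
      rw [mul_zero, sub_zero, abs_of_pos hp]
    rw [hab] at hD
    have hx : q * (4 - r₀) = 2 * p := by ring_nf; linarith
    rcases hq2le _ hx with h | h
    · subst h
      right; left
      have hp1 : p = 1 := by omega
      subst hp1
      refine ⟨by omega, rfl, rfl, rfl⟩
    · subst h
      have hp1 : p = 1 := by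
        interval_cases p
        · rfl
        · exfalso
          have : ¬ IsCoprime (2:ℤ) 2 := by
            rw [Int.isCoprime_iff_gcd_eq_one]; decide
          exact this hcop
      subst hp1
      have hr : r₀ = 3 := by omega
      exfalso
      rw [hr, abs_zero] at heven
      exact (by decide : ¬ Even ((3:ℤ) - 0)) heven
  · -- ν = 1
    left
    have hab : |p - q * 1| = q - p := by
      rw [mul_one, abs_sub_comm, abs_of_nonneg]; omega
    rw [hab] at hD
    have hx : q * r₀ = q * 3 := by linarith
    exact ⟨mul_left_cancel₀ hq.ne' hx, rfl⟩
end
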